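/- Under the uniform random d-subset model, the probability that an output symbol has reduced degree exactly 2 at step u and reduced degree exactly 1 at step u-1 equals (u-1) * C(k-u, d-2) / C(k, d) when 2 ≤ d ≤ k-u+2, and equals 0 otherwise. -/
import Mathlib

open Finset

lemma aux_count (k d : ℕ) (A : Finset (Fin k)) (hd : 2 ≤ d) :
    ((powersetCard d (univ : Finset (Fin k))).filter (fun S => (S ∩ A).card = 2)).card
      = A.card.choose 2 * ((k - A.card).choose (d - 2)) := by
  have hcompl : Aᶜ.card = k - A.card := by
    rw [Finset.card_compl, Fintype.card_fin]
  rw [← hcompl, ← Finset.card_powersetCard, ← Finset.card_powersetCard,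
    ← Finset.card_product]
  apply Finset.card_bij' (fun S _ => (S ∩ A, S \ A)) (fun p _ => p.1 ∪ p.2)
  · intro S hS
    simp only [Finset.mem_filter, Finset.mem_powersetCard] at hS
    obtain ⟨⟨_, hcard⟩, h2⟩ := hS
    simp only [Finset.mem_product, Finset.mem_powersetCard]
    refine ⟨⟨Finset.inter_subset_right, h2⟩, ?_, ?_⟩
    · intro x hx
      simp only [Finset.mem_sdiff] at hx
      simp [Finset.mem_compl, hx.2]
    · have := Finset.card_inter_add_card_sdiff S A
      omega
  · intro p hp
    simp only [Finset.mem_product, Finset.mem_powersetCard] at hp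
    obtain ⟨⟨h1, h1c⟩, h2, h2c⟩ := hp
    have hdisj : Disjoint p.1 p.2 := by
      refine Finset.disjoint_left.mpr (fun x hx hx2 => ?_)
      exact absurd (h1 hx) (Finset.mem_compl.mp (h2 hx2))
    simp only [Finset.mem_filter, Finset.mem_powersetCard]
    have hcu : (p.1 ∪ p.2).card = d := by
      rw [Finset.card_union_of_disjoint hdisj, h1c, h2c]; omega
    refine ⟨⟨Finset.subset_univ _, hcu⟩, ?_⟩
    have : (p.1 ∪ p.2) ∩ A = p.1 := by
      rw [Finset.union_inter_distrib_right]
      have e1 : p.1 ∩ A = p.1 := Finset.inter_eq_left.mpr h1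
      have e2 : p.2 ∩ A = ∅ := by
        refine Finset.eq_empty_of_forall_notMem (fun x hx => ?_)
        simp only [Finset.mem_inter] at hx
        exact (Finset.mem_compl.mp (h2 hx.1)) hx.2
      rw [e1, e2, Finset.union_empty]
    rw [this, h1c]
  · intro S hS
    simp only [Finset.mem_filter, Finset.mem_powersetCard] at hS
    rw [Finset.union_comm]
    exact Finset.sdiff_union_inter S A
  · intro p hp
    simp only [Finset.mem_product, Finset.mem_powersetCard] at hp
    obtain ⟨⟨h1, _⟩, h2, _⟩ := hp
    have e2 : p.2 ∩ A = ∅ := by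
      refine Finset.eq_empty_of_forall_notMem (fun x hx => ?_)
      simp only [Finset.mem_inter] at hx
      exact (Finset.mem_compl.mp (h2 hx.1)) hx.2
    have hdisj : Disjoint p.1 p.2 := by
      refine Finset.disjoint_left.mpr (fun x hx hx2 => ?_)
      exact absurd (h1 hx) (Finset.mem_compl.mp (h2 hx2))
    ext1
    · simp only
      rw [Finset.union_inter_distrib_right, Finset.inter_eq_left.mpr h1, e2,
        Finset.union_empty]
    · simp only
      rw [Finset.union_sdiff_distrib]
      have : p.1 \ A = ∅ := Finset.sdiff_eq_empty_iff_subset.mpr h1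
      rw [this, Finset.empty_union, Finset.sdiff_eq_self_iff_disjoint.mpr]
      exact Finset.disjoint_left.mpr (fun x hx hxA =>
        (Finset.mem_compl.mp (h2 hx)) hxA)

lemma aux_pairs (k d : ℕ) (A : Finset (Fin k)) :
    ((((powersetCard d (univ : Finset (Fin k))) ×ˢ A).filter
        (fun p => (p.1 ∩ A).card = 2 ∧ p.2 ∈ p.1)).card
      = 2 * ((powersetCard d (univ : Finset (Fin k))).filter
          (fun S => (S ∩ A).card = 2)).card) := by
  rw [Finset.card_filter, Finset.sum_product]
  have key : ∀ S : Finset (Fin k),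
      (∑ x ∈ A, if (S ∩ A).card = 2 ∧ x ∈ S then (1:ℕ) else 0)
        = if (S ∩ A).card = 2 then 2 else 0 := by
    intro S
    by_cases h : (S ∩ A).card = 2
    · simp only [h, true_and, if_true]
      rw [← Finset.card_filter, Finset.filter_mem_eq_inter, Finset.inter_comm]
      exact h
    · simp [h]
  rw [Finset.sum_congr rfl (fun S _ => key S), ← Finset.sum_filter,
    Finset.sum_const, smul_eq_mul, mul_comm]

/-- Joint probability that an output symbol has reduced degree 2 at step `u`
and reduced degree 1 at step `u-1` (the removed active symbol chosen uniformly
among the `u` active symbols is one of its two active neighbors). -/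
theorem stmt2 (k u d : ℕ) (hk : 1 ≤ k) (hu1 : 1 ≤ u) (huk : u ≤ k)
    (A : Finset (Fin k)) (hA : A.card = u) :
    ((((Finset.powersetCard d (Finset.univ : Finset (Fin k))) ×ˢ A).filter
        (fun p => (p.1 ∩ A).card = 2 ∧ p.2 ∈ p.1)).card : ℚ) /
        ((k.choose d : ℚ) * u) =
      if 2 ≤ d ∧ d ≤ k - u + 2 then
        (((u - 1) * (k - u).choose (d - 2) : ℕ) : ℚ) / (k.choose d)
      else 0 := by
  by_cases hcond : 2 ≤ d ∧ d ≤ k - u + 2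
  · rw [if_pos hcond]
    have hnum := aux_pairs k d A
    rw [aux_count k d A hcond.1, hA] at hnum
    have h2 : 2 * (u.choose 2 * ((k - u).choose (d - 2)))
        = (u - 1) * (k - u).choose (d - 2) * u := by
      have heven : Even (u * (u - 1)) := by
        have := Nat.even_mul_succ_self (u - 1)
        have hu : u - 1 + 1 = u := by omega
        rw [hu] at this
        rwa [mul_comm]
      have h22 : 2 * u.choose 2 = u * (u - 1) := by
        rw [Nat.choose_two_right, Nat.mul_div_cancel' heven.two_dvd]
      calc 2 * (u.choose 2 * ((k - u).choose (d - 2)))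
          = 2 * u.choose 2 * ((k - u).choose (d - 2)) := by ring
        _ = u * (u - 1) * ((k - u).choose (d - 2)) := by rw [h22]
        _ = (u - 1) * (k - u).choose (d - 2) * u := by ring
    rw [hnum, h2]
    push_cast
    have hu0 : (u : ℚ) ≠ 0 := Nat.cast_ne_zero.mpr (by omega)
    rw [mul_div_mul_right _ _ hu0]
  · rw [if_neg hcond]
    have hempty : (((Finset.powersetCard d (Finset.univ : Finset (Fin k))) ×ˢ A).filter
        (fun p => (p.1 ∩ A).card = 2 ∧ p.2 ∈ p.1)) = ∅ := by
      refine Finset.eq_empty_of_forall_notMem (fun p hp => ?_)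
      simp only [Finset.mem_filter, Finset.mem_product, Finset.mem_powersetCard] at hp
      obtain ⟨⟨⟨_, hcard⟩, _⟩, h2, _⟩ := hp
      have hle : (p.1 ∩ A).card ≤ p.1.card := Finset.card_le_card Finset.inter_subset_left
      have hsd : (p.1 ∩ A).card + (p.1 \ A).card = p.1.card :=
        Finset.card_inter_add_card_sdiff p.1 A
      have hsub : p.1 \ A ⊆ Aᶜ := fun x hx => by
        simp only [Finset.mem_sdiff] at hx; simp [Finset.mem_compl, hx.2]
      have hcA : Aᶜ.card = k - u := by
        rw [Finset.card_compl, Fintype.card_fin, hA]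
      have hle2 : (p.1 \ A).card ≤ k - u := hcA ▸ Finset.card_le_card hsub
      omega
    rw [hempty]
    simp
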